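/- arXiv:2501.06676 — 9 statements merged into one kernel-verified Lean document; each statement's English description precedes it below -/
import Mathlib

section
/- Let S be an L-unipotent semigroup. For every pair of distinct elements a, b ∈ S there exists an idempotent f ∈ S such that f*a ≠ f*b. In particular, S is left reductive: if x*a = x*b for all x ∈ S, then a = b. -/
/-- The principal left ideal `Sa = {x*a : x ∈ S}` of an element of a semigroup. -/
def leftIdeal {S : Type*} [Semigroup S] (a : S) : Set S := {y | ∃ x : S, y = x * a}

/-- A semigroup is (von Neumann) regular if every element `a` has some `x` with `a*x*a = a`. -/
def IsRegularSemigroup (S : Type*) [Semigroup S] : Prop :=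
  ∀ a : S, ∃ x : S, a * x * a = a

/-- A regular semigroup is `L`-unipotent if any two `L`-related idempotents are equal. -/
def IsLUnipotent (S : Type*) [Semigroup S] : Prop :=
  IsRegularSemigroup S ∧
    ∀ e f : S, e * e = e → f * f = f → leftIdeal e = leftIdeal f → e = f

/-- Key lemma: if left multiplication by every idempotent fails to separate `a` and `b`,
then `a = b`. -/
lemma key_lemma {S : Type*} [Semigroup S] (hS : IsLUnipotent S) (a b : S)
    (h : ∀ f : S, f * f = f → f * a = f * b) : a = b := by
  obtain ⟨hreg, huni⟩ := hS
  obtain ⟨x, hx⟩ := hreg a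
  obtain ⟨y, hy⟩ := hreg b
  -- a*x is idempotent
  have hax : (a * x) * (a * x) = a * x := by
    rw [← mul_assoc, hx]
  -- b*y is idempotent
  have hby : (b * y) * (b * y) = b * y := by
    rw [← mul_assoc, hy]
  -- a = a*x*b
  have hA : a = a * x * b := by
    rw [← h (a * x) hax, hx]
  -- b = b*y*a
  have hB : b = b * y * a := by
    rw [h (b * y) hby, hy]
  -- b*x*b = b
  have hbxb : b * x * b = b := by
    calc b * x * b = b * y * a * x * b := by rw [← hB]
      _ = b * y * (a * x * b) := by simp only [mul_assoc]
      _ = b * y * a := by rw [← hA]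
      _ = b := hB.symm
  -- b*x is idempotent
  have hbx : (b * x) * (b * x) = b * x := by
    rw [← mul_assoc, hbxb]
  -- b*x*a = b
  have hC : b * x * a = b := by
    rw [h (b * x) hbx, hbxb]
  -- (a*x)*(b*x) = a*x and (b*x)*(a*x) = b*x
  have h1 : (a * x) * (b * x) = a * x := by
    calc (a * x) * (b * x) = a * x * b * x := by simp only [mul_assoc]
      _ = a * x := by rw [← hA]
  have h2 : (b * x) * (a * x) = b * x := by
    calc (b * x) * (a * x) = b * x * a * x := by simp only [mul_assoc]
      _ = b * x := by rw [hC]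
  -- hence a*x and b*x are L-related
  have hL : leftIdeal (a * x) = leftIdeal (b * x) := by
    ext z
    constructor
    · rintro ⟨w, rfl⟩
      exact ⟨w * (a * x), by rw [mul_assoc, h1]⟩
    · rintro ⟨w, rfl⟩
      exact ⟨w * (b * x), by rw [mul_assoc, h2]⟩
  have hE : a * x = b * x := huni (a * x) (b * x) hax hbx hL
  rw [hA, hE, hbxb]

/-- In an `L`-unipotent semigroup, distinct elements are separated by left multiplication
by some idempotent; in particular the semigroup is left reductive. -/
theorem stmt0 {S : Type*} [Semigroup S] (hS : IsLUnipotent S) :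
    (∀ a b : S, a ≠ b → ∃ f : S, f * f = f ∧ f * a ≠ f * b) ∧
    (∀ a b : S, (∀ x : S, x * a = x * b) → a = b) := by
  constructor
  · intro a b hab
    by_contra hcon
    push_neg at hcon
    exact hab (key_lemma hS a b fun f hf => hcon f hf)
  · intro a b h
    exact key_lemma hS a b fun f _ => h f
end

section
/- Let S be an L-unipotent semigroup and a, b ∈ S. Then a ≤ b in the natural partial order (i.e., there exist idempotents e, f ∈ S with a = b*e and a = f*b) if and only if there exists an idempotent f ∈ S with a = f*b. -/
/-- The principal right ideal `aS = {a*x : x ∈ S}` of an element of a semigroup. -/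
def rightIdeal {S : Type*} [Semigroup S] (a : S) : Set S := {y | ∃ x : S, y = a * x}

/-- Two mutually divisible elements generate the same principal left ideal. -/
lemma leftIdeal_eq_of_mul {S : Type*} [Semigroup S] {p q : S}
    (h1 : p * q = p) (h2 : q * p = q) : leftIdeal p = leftIdeal q := by
  ext y
  constructor
  · rintro ⟨x, rfl⟩
    exact ⟨x * p, by rw [mul_assoc, h1]⟩
  · rintro ⟨x, rfl⟩
    exact ⟨x * q, by rw [mul_assoc, h2]⟩

/-- Every element of a regular semigroup has a (normalized) inverse. -/
lemma exists_inverse {S : Type*} [Semigroup S] (hreg : IsRegularSemigroup S) (u : S) :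
    ∃ v : S, u * v * u = u ∧ v * u * v = v := by
  obtain ⟨x, hx⟩ := hreg u
  refine ⟨x * u * x, ?_, ?_⟩
  · calc u * (x * u * x) * u = (u * x * u) * (x * u) := by simp only [mul_assoc]
      _ = u * (x * u) := by rw [hx]
      _ = u * x * u := by rw [mul_assoc]
      _ = u := hx
  · calc (x * u * x) * u * (x * u * x)
        = x * ((u * x * u) * (x * (u * x))) := by simp only [mul_assoc]
      _ = x * (u * (x * (u * x))) := by rw [hx]
      _ = x * ((u * x * u) * x) := by simp only [mul_assoc]
      _ = x * (u * x) := by rw [hx]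
      _ = x * u * x := by rw [mul_assoc]

/-- In an `L`-unipotent semigroup, idempotents satisfy `e*(f*e) = f*e`. -/
lemma lunipotent_idem {S : Type*} [Semigroup S] (hS : IsLUnipotent S)
    {e f : S} (he : e * e = e) (hf : f * f = f) : e * (f * e) = f * e := by
  obtain ⟨hreg, huni⟩ := hS
  have he' : ∀ y : S, e * (e * y) = e * y := fun y => by rw [← mul_assoc, he]
  have hf' : ∀ y : S, f * (f * y) = f * y := fun y => by rw [← mul_assoc, hf]
  obtain ⟨x₀, hA, hB⟩ := exists_inverse hreg (f * e)
  have hB' : ∀ y : S, x₀ * (f * (e * (x₀ * y))) = x₀ * y := by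
    intro y
    have h := congrArg (· * y) hB
    simp only [mul_assoc] at h
    exact h
  -- the normalized inverse x = e * x₀ * f
  obtain ⟨x, hex, hxf, huxu, hxux⟩ :
      ∃ x : S, e * x = x ∧ x * f = x ∧ (f * e) * x * (f * e) = f * e ∧
        x * (f * e) * x = x := by
    refine ⟨e * x₀ * f, ?_, ?_, ?_, ?_⟩
    · simp only [← mul_assoc, he]
    · simp only [mul_assoc, hf]
    · have hA' := hA
      simp only [mul_assoc] at hA' ⊢
      rw [hf', he']
      exact hA'
    · simp only [mul_assoc]
      rw [hf', he', hB' f]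
  -- x is idempotent
  have hxx : x * x = x := by
    calc x * x = (x * f) * (e * x) := by rw [hxf, hex]
      _ = x * (f * e) * x := by simp only [mul_assoc]
      _ = x := hxux
  -- f*x is idempotent
  have hfxfx : (f * x) * (f * x) = f * x := by
    calc (f * x) * (f * x) = f * ((x * f) * x) := by simp only [mul_assoc]
      _ = f * (x * x) := by rw [hxf]
      _ = f * x := by rw [hxx]
  -- L-unipotence forces f*x = x
  have hfx : f * x = x := by
    apply huni (f * x) x hfxfx hxx
    apply leftIdeal_eq_of_mul
    · calc (f * x) * x = f * (x * x) := by rw [mul_assoc]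
        _ = f * x := by rw [hxx]
    · calc x * (f * x) = (x * f) * x := by rw [← mul_assoc]
        _ = x * x := by rw [hxf]
        _ = x := hxx
  -- hence (f*e)*x = x and x*(f*e) = f*e
  have hux : (f * e) * x = x := by
    calc (f * e) * x = f * (e * x) := by rw [mul_assoc]
      _ = f * x := by rw [hex]
      _ = x := hfx
  have hxu : x * (f * e) = f * e := by
    calc x * (f * e) = ((f * e) * x) * (f * e) := by rw [hux]
      _ = f * e := huxu
  calc e * (f * e) = e * (x * (f * e)) := by rw [hxu]
    _ = (e * x) * (f * e) := by rw [← mul_assoc]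
    _ = x * (f * e) := by rw [hex]
    _ = f * e := hxu

/-- In an `L`-unipotent semigroup, `a ≤ b` in the natural partial order iff
`a = f*b` for some idempotent `f`. -/
theorem stmt2 {S : Type*} [Semigroup S] (hS : IsLUnipotent S) (a b : S) :
    ((∃ e : S, e * e = e ∧ a = b * e) ∧ (∃ f : S, f * f = f ∧ a = f * b)) ↔
      ∃ f : S, f * f = f ∧ a = f * b := by
  constructor
  · rintro ⟨_, h⟩
    exact h
  · rintro ⟨f, hf, hab⟩
    refine ⟨?_, ⟨f, hf, hab⟩⟩
    obtain ⟨b', hb1, _⟩ := exists_inverse hS.1 b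
    have hb1' : b * (b' * b) = b := by rw [← mul_assoc]; exact hb1
    have hg : (b * b') * (b * b') = b * b' := by
      calc (b * b') * (b * b') = (b * b' * b) * b' := by simp only [mul_assoc]
        _ = b * b' := by rw [hb1]
    -- key: b * (b' * (f*b)) = f*b
    have hkey : b * (b' * (f * b)) = f * b := by
      have h := congrArg (· * b) (lunipotent_idem hS hg hf)
      simp only [mul_assoc] at h
      rw [hb1'] at h
      exact h
    refine ⟨b' * (f * b), ?_, ?_⟩
    · calc (b' * (f * b)) * (b' * (f * b))
          = b' * (f * (b * (b' * (f * b)))) := by simp only [mul_assoc]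
        _ = b' * (f * (f * b)) := by rw [hkey]
        _ = b' * (f * b) := by rw [← mul_assoc f f b, hf]
    · calc a = f * b := hab
        _ = b * (b' * (f * b)) := hkey.symm
end

section
/- Every L-unipotent semigroup is orthodox and its idempotents form a right regular band: if S is an L-unipotent semigroup and e, f ∈ S are idempotents, then e*f is idempotent and e*f*e = f*e. Hence the set E(S) of idempotents of S is a subsemigroup of S satisfying the right regular band identity x*y*x = y*x. -/
/-- An `L`-unipotent semigroup is orthodox and its idempotents form a right regular band:
products of idempotents are idempotent, `e*f*e = f*e`, and the idempotents form a
subsemigroup satisfying the right regular band identity. -/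
theorem stmt3 {S : Type*} [Semigroup S] (hS : IsLUnipotent S) :
    (∀ e f : S, e * e = e → f * f = f →
      (e * f) * (e * f) = e * f ∧ e * f * e = f * e) ∧
    ∃ T : Subsemigroup S, (T : Set S) = {e : S | e * e = e} ∧
      ∀ x ∈ T, ∀ y ∈ T, x * y * x = y * x := by
  obtain ⟨hreg, huni⟩ := hS
  have key : ∀ e f : S, e * e = e → f * f = f → (e * f) * (e * f) = e * f := by
    intro e f he hf
    obtain ⟨z0, hz0⟩ := hreg (e * f)
    have hz' : e * (f * (z0 * (e * f))) = e * f := by simpa only [mul_assoc] using hz0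
    have hz1 : ∀ t : S, e * (f * (z0 * (e * (f * t)))) = e * (f * t) := by
      intro t
      calc e * (f * (z0 * (e * (f * t)))) = (e * (f * (z0 * (e * f)))) * t := by
            simp only [mul_assoc]
        _ = (e * f) * t := by rw [hz']
        _ = e * (f * t) := by rw [mul_assoc]
    set x := z0 * (e * (f * z0)) with hxd
    have hxa1 : ∀ t : S, x * (e * (f * (x * t))) = x * t := by
      intro t; rw [hxd]; simp only [mul_assoc, hz1]
    have hax' : e * (f * (x * (e * f))) = e * f := by
      rw [hxd]; simp only [mul_assoc, hz1, hz']
    have he1 : ∀ t : S, e * (e * t) = e * t := fun t => by rw [← mul_assoc, he]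
    have hf1 : ∀ t : S, f * (f * t) = f * t := fun t => by rw [← mul_assoc, hf]
    have hh : (f * (x * e)) * (f * (x * e)) = f * (x * e) := by
      simp only [mul_assoc, hxa1]
    have hkk : (e * (f * (x * e))) * (e * (f * (x * e))) = e * (f * (x * e)) := by
      simp only [mul_assoc, he1, hxa1]
    have hL : leftIdeal (f * (x * e)) = leftIdeal (e * (f * (x * e))) := by
      ext y
      simp only [leftIdeal, Set.mem_setOf_eq]
      constructor
      · rintro ⟨s, rfl⟩
        exact ⟨s * (f * x), by simp only [mul_assoc, hxa1]⟩
      · rintro ⟨s, rfl⟩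
        exact ⟨s * e, by simp only [mul_assoc]⟩
    have hk : f * (x * e) = e * (f * (x * e)) := huni _ _ hh hkk hL
    have hm : (f * (x * (e * f))) * (f * (x * (e * f))) = f * (x * (e * f)) := by
      simp only [mul_assoc, hf1, hxa1]
    have hefm : f * (x * (e * f)) = e * f := by
      calc f * (x * (e * f)) = (f * (x * e)) * f := by simp only [mul_assoc]
        _ = (e * (f * (x * e))) * f := by conv_lhs => rw [hk]
        _ = e * (f * (x * (e * f))) := by simp only [mul_assoc]
        _ = e * f := hax'
    rw [hefm] at hm
    exact hm
  have key2 : ∀ e f : S, e * e = e → f * f = f → e * f * e = f * e := by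
    intro e f he hf
    have hef : (e * f) * (e * f) = e * f := key e f he hf
    have hfe : (f * e) * (f * e) = f * e := key f e hf he
    have hefe : (e * f * e) * (e * f * e) = e * f * e := key (e * f) e hef he
    have hL : leftIdeal (e * f * e) = leftIdeal (f * e) := by
      ext y
      simp only [leftIdeal, Set.mem_setOf_eq]
      constructor
      · rintro ⟨s, rfl⟩
        exact ⟨s * e, by simp only [mul_assoc]⟩
      · rintro ⟨s, rfl⟩
        refine ⟨s * f, ?_⟩
        conv_lhs => rw [← hfe]
        simp only [mul_assoc]
    exact huni _ _ hefe hfe hL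
  refine ⟨fun e f he hf => ⟨key e f he hf, key2 e f he hf⟩, ?_⟩
  refine ⟨{ carrier := {e | e * e = e},
            mul_mem' := fun {a b} ha hb => key a b ha hb }, rfl, ?_⟩
  intro a ha b hb
  exact key2 a b ha hb
end

section
/- A regular semigroup S is L-unipotent if and only if for all idempotents e, f ∈ S one has eS ∩ fS = (e*f)S = (f*e)S, where xS denotes the set {x*s : s ∈ S}. -/
/-- Key lemma: in an L-unipotent regular semigroup, `f*(e*f) = e*f` for idempotents. -/
lemma key_fef {S : Type*} [Semigroup S]
    (hU : ∀ e f : S, e * e = e → f * f = f → leftIdeal e = leftIdeal f → e = f)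
    {e f x₀ : S} (he : e * e = e) (hf : f * f = f)
    (hx₀ : (e * f) * x₀ * (e * f) = e * f) : f * (e * f) = e * f := by
  set p := e * f with hp
  -- rewrite rules, all oriented towards right-associated normal forms
  have hez : ∀ z : S, e * (e * z) = e * z := fun z => by rw [← mul_assoc, he]
  have hfz : ∀ z : S, f * (f * z) = f * z := fun z => by rw [← mul_assoc, hf]
  have hef0 : e * f = p := hp.symm
  have hefz : ∀ z : S, e * (f * z) = p * z := fun z => by rw [hp, ← mul_assoc]
  have hpf0 : p * f = p := by rw [hp, mul_assoc, hf]
  have hpfz : ∀ z : S, p * (f * z) = p * z := fun z => by rw [← mul_assoc, hpf0]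
  have hep0 : e * p = p := by rw [hp, ← mul_assoc, he]
  have hepz : ∀ z : S, e * (p * z) = p * z := fun z => by rw [← mul_assoc, hep0]
  have hpx0 : p * (x₀ * p) = p := by rw [← mul_assoc]; exact hx₀
  have hpxz : ∀ z : S, p * (x₀ * (p * z)) = p * z := fun z => by
    rw [← mul_assoc, ← mul_assoc, hx₀]
  set x := f * (x₀ * p * x₀) * e with hxdef
  have hxx : x * x = x := by
    simp only [hxdef, mul_assoc]
    simp only [hez, hfz, hefz, hpfz, hepz, hpxz, he, hf, hef0, hpf0, hep0, hpx0]
  have hfx : f * x = x := by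
    simp only [hxdef, mul_assoc]
    simp only [hez, hfz, hefz, hpfz, hepz, hpxz, he, hf, hef0, hpf0, hep0, hpx0]
  have hxe : x * e = x := by
    simp only [hxdef, mul_assoc]
    simp only [hez, hfz, hefz, hpfz, hepz, hpxz, he, hf, hef0, hpf0, hep0, hpx0]
  have hxex : x * (e * x) = x := by
    simp only [hxdef, mul_assoc]
    simp only [hez, hfz, hefz, hpfz, hepz, hpxz, he, hf, hef0, hpf0, hep0, hpx0]
  have hexid : (e * x) * (e * x) = e * x := by
    simp only [hxdef, mul_assoc]
    simp only [hez, hfz, hefz, hpfz, hepz, hpxz, he, hf, hef0, hpf0, hep0, hpx0]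
  have hax : p * x * p = p := by
    simp only [hxdef, mul_assoc]
    simp only [hez, hfz, hefz, hpfz, hepz, hpxz, he, hf, hef0, hpf0, hep0, hpx0]
  -- the (single) application of L-unipotency: x and e*x are L-related idempotents
  have hideal : leftIdeal x = leftIdeal (e * x) := by
    ext y
    constructor
    · rintro ⟨s, rfl⟩
      exact ⟨s * x, by rw [mul_assoc, hxex]⟩
    · rintro ⟨t, rfl⟩
      exact ⟨t * e, by rw [mul_assoc]⟩
  have hex : x = e * x := hU x (e * x) hxx hexid hideal
  have hpx2 : p * x = x := by rw [hp, mul_assoc, hfx, ← hex]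
  have hxp : x * p = p := by
    conv_rhs => rw [← hax]
    rw [hpx2]
  show f * p = p
  conv_lhs => rw [← hxp]
  rw [← mul_assoc, hfx, hxp]

/-- Half of the set-level statement. -/
lemma inter_eq {S : Type*} [Semigroup S] {e f : S} (he : e * e = e) (hf : f * f = f)
    (hfef : f * (e * f) = e * f) :
    rightIdeal e ∩ rightIdeal f = rightIdeal (e * f) := by
  ext y
  constructor
  · rintro ⟨⟨s, hs⟩, ⟨t, ht⟩⟩
    have h1 : e * y = y := by rw [hs, ← mul_assoc, he]
    have h2 : f * y = y := by rw [ht, ← mul_assoc, hf]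
    exact ⟨y, by rw [mul_assoc, h2, h1]⟩
  · rintro ⟨s, rfl⟩
    constructor
    · exact ⟨f * s, by rw [mul_assoc]⟩
    · exact ⟨e * f * s, by rw [← mul_assoc, hfef]⟩

/-- A regular semigroup is `L`-unipotent iff `eS ∩ fS = (ef)S = (fe)S`
for all idempotents `e, f`. -/
theorem stmt6 {S : Type*} [Semigroup S] (hS : IsRegularSemigroup S) :
    IsLUnipotent S ↔ ∀ e f : S, e * e = e → f * f = f →
      rightIdeal e ∩ rightIdeal f = rightIdeal (e * f) ∧
      rightIdeal e ∩ rightIdeal f = rightIdeal (f * e) := by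
  constructor
  · rintro ⟨-, hU⟩ e f he hf
    obtain ⟨x₀, hx₀⟩ := hS (e * f)
    obtain ⟨x₁, hx₁⟩ := hS (f * e)
    have hfef : f * (e * f) = e * f := key_fef hU he hf hx₀
    have hefe : e * (f * e) = f * e := key_fef hU hf he hx₁
    refine ⟨inter_eq he hf hfef, ?_⟩
    rw [Set.inter_comm]
    exact inter_eq hf he hefe
  · intro h
    refine ⟨hS, ?_⟩
    intro e f he hf hLF
    have hef : e ∈ leftIdeal f := by rw [← hLF]; exact ⟨e, he.symm⟩
    obtain ⟨z, hz⟩ := hef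
    have h1 : e * f = e := by rw [hz, mul_assoc, hf]
    have hfe : f ∈ leftIdeal e := by rw [hLF]; exact ⟨f, hf.symm⟩
    obtain ⟨w, hw⟩ := hfe
    have h2 : f * e = f := by rw [hw, mul_assoc, he]
    obtain ⟨hA, hB⟩ := h e f he hf
    rw [h1] at hA
    rw [h2] at hB
    have hre : rightIdeal e = rightIdeal f := hA.symm.trans hB
    have hfmem : f ∈ rightIdeal e := by rw [hre]; exact ⟨f, hf.symm⟩
    obtain ⟨t, ht⟩ := hfmem
    have h3 : e * f = f := by rw [ht, ← mul_assoc, he]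
    exact h1.symm.trans h3
end

section
/- A regular semigroup S is L-unipotent if and only if for every a ∈ S and all inverses a', a'' of a one has a'*a = a''*a. -/
lemma lid_inv {S : Type*} [Semigroup S] {a a' : S} (h : a * a' * a = a) :
    leftIdeal (a' * a) = leftIdeal a := by
  ext y
  constructor
  · rintro ⟨x, rfl⟩
    exact ⟨x * a', by rw [mul_assoc]⟩
  · rintro ⟨x, rfl⟩
    refine ⟨x * a, ?_⟩
    calc x * a = x * (a * a' * a) := by rw [h]
    _ = x * a * (a' * a) := by simp [mul_assoc]

/-- A regular semigroup is `L`-unipotent iff `a'*a = a''*a` for all `a` and all inverses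
`a', a''` of `a`. -/
theorem stmt7 {S : Type*} [Semigroup S] (hS : IsRegularSemigroup S) :
    IsLUnipotent S ↔ ∀ a a' a'' : S,
      (a * a' * a = a ∧ a' * a * a' = a') → (a * a'' * a = a ∧ a'' * a * a'' = a'') →
      a' * a = a'' * a := by
  constructor
  · rintro ⟨-, hU⟩ a a' a'' ⟨h1, h2⟩ ⟨h3, h4⟩
    apply hU
    · simp only [← mul_assoc, h2]
    · simp only [← mul_assoc, h4]
    · rw [lid_inv h1, lid_inv h3]
  · intro h
    refine ⟨hS, fun e f he hf hef => ?_⟩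
    obtain ⟨x, hx⟩ : e ∈ leftIdeal f := by
      rw [← hef]; exact ⟨e, he.symm⟩
    obtain ⟨y, hy⟩ : f ∈ leftIdeal e := by
      rw [hef]; exact ⟨f, hf.symm⟩
    have hef' : e * f = e := by
      calc e * f = x * f * f := by rw [← hx]
      _ = x * (f * f) := by rw [mul_assoc]
      _ = e := by rw [hf, ← hx]
    have hfe : f * e = f := by
      calc f * e = y * e * e := by rw [← hy]
      _ = y * (e * e) := by rw [mul_assoc]
      _ = f := by rw [he, ← hy]
    have := h e e f ⟨by rw [he, he], by rw [he, he]⟩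
      ⟨by rw [hef', he], by rw [hfe, hf]⟩
    rw [he, hfe] at this
    exact this
end

section
/- A regular semigroup S is L-unipotent if and only if for every a ∈ S, all inverses a', a'' of a, and every idempotent e ∈ S, one has a'*e*a = a''*e*a. -/
/-- Idempotents with `α*β = α`, `β*α = β` generate the same left ideal. -/
lemma lrel {S : Type*} [Semigroup S] (α β : S) (hαβ : α * β = α) (hβα : β * α = β) :
    leftIdeal α = leftIdeal β := by
  ext y
  constructor
  · rintro ⟨z, rfl⟩
    exact ⟨z * α, by rw [mul_assoc, hαβ]⟩
  · rintro ⟨z, rfl⟩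
    exact ⟨z * β, by rw [mul_assoc, hβα]⟩

/-- In an L-unipotent regular semigroup, `E*(F*E) = F*E` for idempotents `E, F`. -/
lemma band {S : Type*} [Semigroup S] (hS : IsRegularSemigroup S)
    (huni : ∀ e f : S, e * e = e → f * f = f → leftIdeal e = leftIdeal f → e = f)
    (E F : S) (hE : E * E = E) (hF : F * F = F) : E * (F * E) = F * E := by
  obtain ⟨x0, hx0⟩ := hS (F * E)
  set x := x0 * (F * E) * x0 with hxdef
  have k1 : ∀ t : S, F * (E * (x0 * (F * (E * t)))) = F * (E * t) := fun t => by
    simpa only [mul_assoc] using congrArg (· * t) hx0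
  have hx0r : F * (E * (x0 * (F * E))) = F * E := by
    simpa only [mul_assoc] using hx0
  have hinv1 : F * E * x * (F * E) = F * E := by
    rw [hxdef]
    simp only [mul_assoc]
    rw [k1, hx0r]
  have hinv2 : x * (F * E) * x = x := by
    rw [hxdef]
    simp only [mul_assoc]
    simp only [k1]
  have hinv1r : F * (E * (x * (F * E))) = F * E := by
    simpa only [mul_assoc] using hinv1
  have k3 : ∀ t : S, x * (F * (E * (x * t))) = x * t := fun t => by
    simpa only [mul_assoc] using congrArg (· * t) hinv2
  have hEX : ∀ t : S, E * (E * t) = E * t := fun t => by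
    simpa only [mul_assoc] using congrArg (· * t) hE
  have A1 : (E * x * F) * (E * x * F) = E * x * F := by
    simp only [mul_assoc]
    rw [k3]
  have hgF : (E * x * F) * F = E * x * F := by
    simp only [mul_assoc]
    rw [hF]
  have A3 : (E * x * F) * (F * (E * x * F)) = E * x * F := by
    rw [← mul_assoc (E * x * F) F (E * x * F), hgF, A1]
  have A4 : (F * (E * x * F)) * (E * x * F) = F * (E * x * F) := by
    rw [mul_assoc F (E * x * F) (E * x * F), A1]
  have A2 : (F * (E * x * F)) * (F * (E * x * F)) = F * (E * x * F) := by
    rw [mul_assoc F (E * x * F) (F * (E * x * F)), A3]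
  have geq : E * x * F = F * (E * x * F) := huni _ _ A1 A2 (lrel _ _ A3 A4)
  have h2' : (F * (E * x * F)) * E = F * E := by
    simp only [mul_assoc]
    exact hinv1r
  have h3' : (E * x * F) * E = F * E := by rw [geq]; exact h2'
  rw [← h3']
  simp only [mul_assoc]
  rw [hEX]

/-- A regular semigroup is `L`-unipotent iff `a'*e*a = a''*e*a` for all `a`, all inverses
`a', a''` of `a`, and every idempotent `e`. -/
theorem stmt8 {S : Type*} [Semigroup S] (hS : IsRegularSemigroup S) :
    IsLUnipotent S ↔ ∀ a a' a'' e : S,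
      (a * a' * a = a ∧ a' * a * a' = a') → (a * a'' * a = a ∧ a'' * a * a'' = a'') →
      e * e = e → a' * e * a = a'' * e * a := by
  constructor
  · rintro ⟨-, huni⟩ a a' a'' e ⟨h1, h2⟩ ⟨h3, h4⟩ he
    -- two inverses of `a` give the same idempotent `x*a`
    have idm' : (a' * a) * (a' * a) = a' * a := by
      rw [mul_assoc a' a (a' * a), ← mul_assoc a a' a, h1]
    have idm'' : (a'' * a) * (a'' * a) = a'' * a := by
      rw [mul_assoc a'' a (a'' * a), ← mul_assoc a a'' a, h3]
    have rel1 : (a' * a) * (a'' * a) = a' * a := by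
      rw [mul_assoc a' a (a'' * a), ← mul_assoc a a'' a, h3]
    have rel2 : (a'' * a) * (a' * a) = a'' * a := by
      rw [mul_assoc a'' a (a' * a), ← mul_assoc a a' a, h1]
    have key : a' * a = a'' * a := huni _ _ idm' idm'' (lrel _ _ rel1 rel2)
    -- the band identity for the idempotents `a*a'` and `e`
    have hG : (a * a') * (a * a') = a * a' := by
      rw [mul_assoc a a' (a * a'), ← mul_assoc a' a a', h2]
    have bnd : (a * a') * (e * (a * a')) = e * (a * a') := band hS huni (a * a') e hG he
    have h1' : a * (a' * a) = a := by simpa only [mul_assoc] using h1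
    have keyX : ∀ t : S, a'' * (a * t) = a' * (a * t) := fun t => by
      simpa only [mul_assoc] using congrArg (· * t) key.symm
    have h2X : ∀ t : S, a' * (a * (a' * t)) = a' * t := fun t => by
      simpa only [mul_assoc] using congrArg (· * t) h2
    have bndX : ∀ t : S, a * (a' * (e * (a * (a' * t)))) = e * (a * (a' * t)) := fun t => by
      simpa only [mul_assoc] using congrArg (· * t) bnd
    have red2 : a'' * (a * (a' * (e * (a * (a' * a))))) = a' * (e * a) := by
      rw [h1', keyX, h2X]
    have red1 : a'' * (a * (a' * (e * (a * (a' * a))))) = a'' * (e * a) := by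
      rw [bndX, h1']
    have : a' * (e * a) = a'' * (e * a) := red2.symm.trans red1
    simpa only [mul_assoc] using this
  · intro h
    refine ⟨hS, ?_⟩
    intro E F hE hF hLI
    have hEmem : E ∈ leftIdeal F := by rw [← hLI]; exact ⟨E, hE.symm⟩
    have hFmem : F ∈ leftIdeal E := by rw [hLI]; exact ⟨F, hF.symm⟩
    obtain ⟨z, hz⟩ := hEmem
    obtain ⟨w, hw⟩ := hFmem
    have hEF : E * F = E := by rw [hz, mul_assoc, hF]
    have hFE : F * E = F := by rw [hw, mul_assoc, hE]
    have t := h E F E E ⟨by rw [hEF, hE], by rw [hFE, hF]⟩ ⟨by rw [hE, hE], by rw [hE, hE]⟩ hE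
    rw [hFE, hFE, hE, hE] at t
    exact t.symm
end

section
/- A regular semigroup S is L-unipotent if and only if for every a ∈ S, every inverse a' of a, and every idempotent e ∈ S, one has a*a'*e*a = e*a. -/
/-- Every element of a regular semigroup has a genuine (two-sided) inverse. -/
lemma exists_inv {S : Type*} [Semigroup S] (hS : IsRegularSemigroup S) (a : S) :
    ∃ x : S, a * x * a = a ∧ x * a * x = x := by
  obtain ⟨x0, h⟩ := hS a
  refine ⟨x0 * a * x0, ?_, ?_⟩
  · calc a * (x0 * a * x0) * a = (a * x0 * a) * (x0 * a) := by simp only [mul_assoc]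
      _ = a * (x0 * a) := by rw [h]
      _ = a := by rw [← mul_assoc, h]
  · calc x0 * a * x0 * a * (x0 * a * x0)
        = x0 * (a * x0 * a) * (x0 * a * x0) := by simp only [mul_assoc]
      _ = (x0 * a) * (x0 * a * x0) := by rw [h]
      _ = x0 * (a * x0 * a) * x0 := by simp only [mul_assoc]
      _ = x0 * a * x0 := by rw [h]

/-- In an `L`-unipotent semigroup, if `α*β = α` for idempotents `α, β`, then `β*α = α`. -/
lemma minilem {S : Type*} [Semigroup S]
    (huni : ∀ e f : S, e * e = e → f * f = f → leftIdeal e = leftIdeal f → e = f)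
    {α β : S} (hα : α * α = α) (hβ : β * β = β) (h : α * β = α) : β * α = α := by
  have hβα : (β * α) * (β * α) = β * α := by
    calc β * α * (β * α) = β * (α * β) * α := by simp only [mul_assoc]
      _ = β * α := by rw [h, mul_assoc, hα]
  have hL : leftIdeal (β * α) = leftIdeal α := by
    ext y
    constructor
    · rintro ⟨c, rfl⟩
      exact ⟨c * β, by rw [mul_assoc]⟩
    · rintro ⟨c, rfl⟩
      exact ⟨c * α, by rw [mul_assoc, ← mul_assoc α, h, hα]⟩
  exact huni (β * α) α hβα hα hL

/-- In an `L`-unipotent semigroup, `g*e*g = e*g` for idempotents `e, g`. -/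
lemma geg {S : Type*} [Semigroup S] (hS : IsRegularSemigroup S)
    (huni : ∀ e f : S, e * e = e → f * f = f → leftIdeal e = leftIdeal f → e = f)
    {e g : S} (he : e * e = e) (hg : g * g = g) : g * (e * g) = e * g := by
  obtain ⟨x, h1, h2⟩ := exists_inv hS (e * g)
  have hv : (g * x * e) * (g * x * e) = g * x * e := by
    calc (g * x * e) * (g * x * e) = g * (x * (e * g) * x) * e := by simp only [mul_assoc]
      _ = g * x * e := by rw [h2]
  have hgv : g * (g * x * e) = g * x * e := by
    calc g * (g * x * e) = g * g * (x * e) := by simp only [mul_assoc]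
      _ = g * (x * e) := by rw [hg]
      _ = g * x * e := by rw [mul_assoc]
  have hve : (g * x * e) * e = g * x * e := by rw [mul_assoc, he]
  have hev : e * (g * x * e) = g * x * e := minilem huni hv he hve
  have hevg : e * ((g * x * e) * g) = e * g := by
    calc e * ((g * x * e) * g) = (e * g) * x * (e * g) := by simp only [mul_assoc]
      _ = e * g := h1
  have hvg : (g * x * e) * g = e * g := by
    calc (g * x * e) * g = (e * (g * x * e)) * g := by rw [hev]
      _ = e * ((g * x * e) * g) := by rw [mul_assoc]
      _ = e * g := hevg
  calc g * (e * g) = g * ((g * x * e) * g) := by rw [hvg]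
    _ = (g * (g * x * e)) * g := (mul_assoc _ _ _).symm
    _ = (g * x * e) * g := by rw [hgv]
    _ = e * g := hvg

/-- A regular semigroup is `L`-unipotent iff `a*a'*e*a = e*a` for all `a`, every inverse
`a'` of `a`, and every idempotent `e`. -/
theorem stmt9 {S : Type*} [Semigroup S] (hS : IsRegularSemigroup S) :
    IsLUnipotent S ↔ ∀ a a' e : S,
      (a * a' * a = a ∧ a' * a * a' = a') → e * e = e →
      a * a' * e * a = e * a := by
  constructor
  · rintro ⟨-, huni⟩ a a' e ⟨ha1, -⟩ he
    have hg : (a * a') * (a * a') = a * a' := by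
      calc (a * a') * (a * a') = (a * a' * a) * a' := by simp only [mul_assoc]
        _ = a * a' := by rw [ha1]
    have key := geg hS huni he hg
    calc a * a' * e * a = a * a' * e * (a * a' * a) := by rw [ha1]
      _ = (a * a') * (e * (a * a')) * a := by simp only [mul_assoc]
      _ = (e * (a * a')) * a := by rw [key]
      _ = e * (a * a' * a) := by simp only [mul_assoc]
      _ = e * a := by rw [ha1]
  · intro h
    refine ⟨hS, fun e f he hf hL => ?_⟩
    have hef : e * f = e := by
      have he' : e ∈ leftIdeal f := hL ▸ (⟨e, he.symm⟩ : e ∈ leftIdeal e)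
      obtain ⟨c, hc⟩ := he'
      rw [hc, mul_assoc, hf]
    have hfe : f * e = f := by
      have hf' : f ∈ leftIdeal e := hL.symm ▸ (⟨f, hf.symm⟩ : f ∈ leftIdeal f)
      obtain ⟨c, hc⟩ := hf'
      rw [hc, mul_assoc, he]
    have h2 := h e e f ⟨by rw [he, he], by rw [he, he]⟩ hf
    rw [he, hef, he, hfe] at h2
    exact h2
end

section
/- Fix n : ℕ. The set of cones in the full powerset category of Fin n is closed under the composition γ·δ (the composite of two cones is again a cone), and the map φ sending a cone γ with vertex Z to the function Fin n → Fin n given by i ↦ γ_{Fin n}(i) (viewed as an element of Fin n) is a bijection from the set of cones onto the set of all functions Fin n → Fin n which satisfies φ(γ·δ) = φ(δ) ∘ φ(γ). Hence the semigroup of cones under the composition γ·δ is isomorphic to the full transformation monoid T_n. -/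
/-- The data of a cone in the full powerset category of `Fin n`: a vertex `Z ⊆ Fin n`
together with, for every subset `A ⊆ Fin n`, a component function `A → Fin n` taking
values in the vertex. -/
structure ConeData (n : ℕ) where
  vertex : Set (Fin n)
  comp : ∀ A : Set (Fin n), A → Fin n
  mem_vertex : ∀ (A : Set (Fin n)) (a : A), comp A a ∈ vertex

/-- `γ` is a cone: its components are compatible with inclusions of subsets, and some
component `γ_C : C → Z` is a bijection onto the vertex `Z`. -/
def IsCone {n : ℕ} (γ : ConeData n) : Prop :=
  (∀ (A B : Set (Fin n)) (h : A ⊆ B) (a : A), γ.comp A a = γ.comp B ⟨a.1, h a.2⟩) ∧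
  ∃ C : Set (Fin n), Function.Injective (γ.comp C) ∧ Set.range (γ.comp C) = γ.vertex

/-- The composite `γ·δ` of two cones: its vertex is `{δ_{Z₁}(z) : z ∈ Z₁}` where `Z₁` is
the vertex of `γ`, and its component at `A` is `a ↦ δ_{Z₁}(γ_A(a))`. -/
def coneMul {n : ℕ} (γ δ : ConeData n) : ConeData n where
  vertex := Set.range (δ.comp γ.vertex)
  comp := fun A a => δ.comp γ.vertex ⟨γ.comp A a, γ.mem_vertex A a⟩
  mem_vertex := fun A a => ⟨⟨γ.comp A a, γ.mem_vertex A a⟩, rfl⟩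

/-- The component of a cone at the full set, viewed as a transformation of `Fin n`. -/
def topFun {n : ℕ} (γ : ConeData n) : Fin n → Fin n :=
  fun i => γ.comp Set.univ ⟨i, Set.mem_univ i⟩

/-- Every component of a cone is the restriction of the top component. -/
lemma comp_eq_top {n : ℕ} {γ : ConeData n} (hγ : IsCone γ) (A : Set (Fin n)) (a : A) :
    γ.comp A a = topFun γ a.1 := by
  have := hγ.1 A Set.univ (Set.subset_univ A) a
  rw [this]; rfl

/-- The vertex of a cone is the range of the top component. -/
lemma vertex_eq_range {n : ℕ} {γ : ConeData n} (hγ : IsCone γ) :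
    γ.vertex = Set.range (topFun γ) := by
  obtain ⟨hcompat, C, hinj, hrange⟩ := hγ
  ext y
  constructor
  · intro hy
    rw [← hrange] at hy
    obtain ⟨c, rfl⟩ := hy
    exact ⟨c.1, (comp_eq_top ⟨hcompat, C, hinj, hrange⟩ C c).symm⟩
  · rintro ⟨x, rfl⟩
    exact γ.mem_vertex Set.univ ⟨x, Set.mem_univ x⟩

/-- Any function admits a subset of its domain on which it is injective
with the same range. -/
lemma exists_section {α β : Type*} (g : α → β) :
    ∃ C : Set α, Function.Injective (fun c : C => g c.1) ∧
      Set.range (fun c : C => g c.1) = Set.range g := by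
  choose s hs using fun y : Set.range g => y.2
  refine ⟨Set.range s, ?_, ?_⟩
  · rintro ⟨-, y₁, rfl⟩ ⟨-, y₂, rfl⟩ h
    simp only [hs] at h
    have : y₁ = y₂ := Subtype.ext h
    subst this
    rfl
  · ext y
    constructor
    · rintro ⟨⟨-, y', rfl⟩, rfl⟩
      exact ⟨s y', rfl⟩
    · rintro ⟨x, rfl⟩
      exact ⟨⟨s ⟨g x, ⟨x, rfl⟩⟩, ⟨_, rfl⟩⟩, hs ⟨g x, ⟨x, rfl⟩⟩⟩

/-- The component of a composite cone, in terms of top components. -/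
lemma coneMul_comp {n : ℕ} {γ δ : ConeData n} (hδ : IsCone δ) (A : Set (Fin n)) (a : A) :
    (coneMul γ δ).comp A a = topFun δ (γ.comp A a) := by
  show δ.comp γ.vertex _ = _
  rw [hδ.1 γ.vertex Set.univ (Set.subset_univ _)]
  rfl

/-- Equal top components imply equal cones. -/
lemma cone_ext {n : ℕ} {γ δ : ConeData n} (hγ : IsCone γ) (hδ : IsCone δ)
    (h : topFun γ = topFun δ) : γ = δ := by
  have hv : γ.vertex = δ.vertex := by
    rw [vertex_eq_range hγ, vertex_eq_range hδ, h]
  have hc : γ.comp = δ.comp := by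
    funext A a
    rw [comp_eq_top hγ, comp_eq_top hδ, h]
  cases γ; cases δ
  simp only at hv hc
  subst hv; subst hc
  rfl

/-- Cones are closed under composition, and taking the top component is a bijection from
cones onto all transformations of `Fin n` which is anti-multiplicative in the categorical
order, i.e. a homomorphism onto `T_n` with left-to-right composition:
`φ(γ·δ) = φ(δ) ∘ φ(γ)`. Hence the semigroup of cones is isomorphic to `T_n`. -/
theorem stmt12 (n : ℕ) :
    (∀ γ δ : ConeData n, IsCone γ → IsCone δ → IsCone (coneMul γ δ)) ∧
    Function.Bijective (fun γ : {γ : ConeData n // IsCone γ} => topFun γ.1) ∧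
    (∀ γ δ : ConeData n, IsCone γ → IsCone δ →
      topFun (coneMul γ δ) = topFun δ ∘ topFun γ) := by
  have hmul : ∀ γ δ : ConeData n, IsCone γ → IsCone δ → IsCone (coneMul γ δ) := by
    intro γ δ hγ hδ
    constructor
    · intro A B h a
      show δ.comp γ.vertex _ = δ.comp γ.vertex _
      congr 1
      exact Subtype.ext (hγ.1 A B h a)
    · set g : Fin n → Fin n := fun i => topFun δ (topFun γ i) with hg
      obtain ⟨C, hinj, hrange⟩ := exists_section g
      have key : (coneMul γ δ).comp C = fun c : C => g c.1 := by
        funext c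
        rw [coneMul_comp hδ, comp_eq_top hγ]
      have hvert : (coneMul γ δ).vertex = Set.range g := by
        show Set.range (δ.comp γ.vertex) = _
        ext y
        constructor
        · rintro ⟨z, rfl⟩
          rw [comp_eq_top hδ]
          have hz : (z : Fin n) ∈ Set.range (topFun γ) := by
            rw [← vertex_eq_range hγ]; exact z.2
          obtain ⟨x, hx⟩ := hz
          exact ⟨x, congrArg (topFun δ) hx⟩
        · rintro ⟨x, rfl⟩
          have hz : topFun γ x ∈ γ.vertex := by
            rw [vertex_eq_range hγ]; exact ⟨x, rfl⟩
          refine ⟨⟨topFun γ x, hz⟩, ?_⟩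
          rw [comp_eq_top hδ]
      exact ⟨C, by rw [key]; exact hinj, by rw [key, hvert]; exact hrange⟩
  refine ⟨hmul, ⟨?_, ?_⟩, ?_⟩
  · rintro ⟨γ, hγ⟩ ⟨δ, hδ⟩ h
    exact Subtype.ext (cone_ext hγ hδ h)
  · intro f
    refine ⟨⟨⟨Set.range f, fun A a => f a.1, fun A a => ⟨a.1, rfl⟩⟩, ?_⟩, rfl⟩
    refine ⟨fun A B h a => rfl, ?_⟩
    obtain ⟨C, hinj, hrange⟩ := exists_section f
    exact ⟨C, hinj, hrange⟩
  · intro γ δ hγ hδ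
    funext i
    show (coneMul γ δ).comp Set.univ ⟨i, Set.mem_univ i⟩ = _
    rw [coneMul_comp hδ, comp_eq_top hγ]
    rfl
end

section
/- Let S be an L-unipotent semigroup. Then for all a, b ∈ S there exists c ∈ S with aS ∩ bS = cS; concretely, if e is an idempotent with eS = aS and f is an idempotent with fS = bS, then aS ∩ bS = (e*f)S. Hence the poset of principal right ideals of S ordered by inclusion is a meet-semilattice, with meet of eS and fS (e, f idempotent) given by (e*f)S. -/
/-- The key band identity in an `L`-unipotent semigroup: for idempotents `e, f`,
one has `f*(e*f) = e*f`. -/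
theorem lunipotent_key {S : Type*} [Semigroup S] (hS : IsLUnipotent S)
    {e f : S} (he : e * e = e) (hf : f * f = f) : f * (e * f) = e * f := by
  obtain ⟨u, hu⟩ := hS.1 (e * f)
  -- normalize hu to right-associated form
  have hu0 : e * (f * (u * (e * f))) = e * f := by
    simpa only [mul_assoc] using hu
  have hu1 : ∀ z : S, e * (f * (u * (e * (f * z)))) = e * (f * z) := fun z => by
    simpa only [mul_assoc] using congrArg (· * z) hu
  have he1 : ∀ z : S, e * (e * z) = e * z := fun z => by rw [← mul_assoc, he]
  have hf1 : ∀ z : S, f * (f * z) = f * z := fun z => by rw [← mul_assoc, hf]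
  -- the normalized inverse x = f * (u*(e*f)*u) * e of e*f
  set x : S := f * (u * (e * (f * (u * e)))) with hx
  -- F1 : f * x = x
  have F1 : f * x = x := by rw [hx, hf1]
  have F1z : ∀ z : S, f * (x * z) = x * z := fun z => by
    simpa only [mul_assoc] using congrArg (· * z) F1
  -- F2 : x * e = x
  have F2 : x * e = x := by
    rw [hx]; simp only [mul_assoc, he]
  -- hA1 : e*f*x*(e*f) = e*f
  have hA1 : e * (f * (x * (e * f))) = e * f := by
    rw [hx]
    simp only [mul_assoc]
    rw [hf1, he1, hu0, hu0]
  -- F5 : x * x = x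
  have F5 : x * x = x := by
    conv_lhs => rw [hx]
    simp only [mul_assoc]
    rw [hu1, hu1]
  -- F7 : x * (e * x) = x
  have F7 : x * (e * x) = x := by
    rw [← mul_assoc, F2, F5]
  -- e*x is idempotent
  have F6 : (e * x) * (e * x) = e * x := by
    rw [mul_assoc]
    rw [F7]
  -- x and e*x generate the same left ideal
  have hLI : leftIdeal x = leftIdeal (e * x) := by
    ext y
    constructor
    · rintro ⟨s, rfl⟩
      exact ⟨s * x, by rw [mul_assoc, F7]⟩
    · rintro ⟨s, rfl⟩
      exact ⟨s * e, by rw [mul_assoc]⟩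
  -- unipotence : e * x = x
  have hex : e * x = x := (hS.2 x (e * x) F5 F6 hLI).symm
  -- F9 : f * (e * (f * x)) = x
  have F9 : f * (e * (f * x)) = x := by rw [F1, hex, F1]
  have F9z : ∀ z : S, f * (e * (f * (x * z))) = x * z := fun z => by
    simpa only [mul_assoc] using congrArg (· * z) F9
  -- G1 : f * (e*f) = x * (e*f)
  have G1 : f * (e * f) = x * (e * f) := by
    conv_lhs => rw [← hA1]
    rw [F9z]
  -- G2 : e * (f * (e*f)) = x * (e*f)
  have G2 : e * (f * (e * f)) = x * (e * f) := by
    rw [G1, ← mul_assoc, hex]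
  -- final chain : e*f = f*(e*f)
  have final : e * f = f * (e * f) := by
    conv_lhs => rw [← hA1]
    rw [← G1, hf1, G2, ← G1]
  exact final.symm

/-- In an `L`-unipotent semigroup the principal right ideals form a meet-semilattice under
inclusion: `aS ∩ bS = cS` for some `c`; concretely, if `eS = aS` and `fS = bS` with
`e, f` idempotent, then `aS ∩ bS = (e*f)S`. -/
theorem stmt16 {S : Type*} [Semigroup S] (hS : IsLUnipotent S) :
    (∀ a b : S, ∃ c : S, rightIdeal a ∩ rightIdeal b = rightIdeal c) ∧
    (∀ a b e f : S, e * e = e → f * f = f →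
      rightIdeal e = rightIdeal a → rightIdeal f = rightIdeal b →
      rightIdeal a ∩ rightIdeal b = rightIdeal (e * f)) := by
  have main : ∀ a b e f : S, e * e = e → f * f = f →
      rightIdeal e = rightIdeal a → rightIdeal f = rightIdeal b →
      rightIdeal a ∩ rightIdeal b = rightIdeal (e * f) := by
    intro a b e f he hf hea hfb
    ext y
    constructor
    · rintro ⟨hya, hyb⟩
      rw [← hea] at hya
      rw [← hfb] at hyb
      obtain ⟨s, rfl⟩ := hya
      obtain ⟨t, ht⟩ := hyb
      have hey : e * (e * s) = e * s := by rw [← mul_assoc, he]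
      have hfy : f * (e * s) = e * s := by rw [ht, ← mul_assoc, hf]
      exact ⟨e * s, by rw [mul_assoc, hfy, hey]⟩
    · rintro ⟨z, rfl⟩
      constructor
      · rw [← hea]
        exact ⟨f * z, by rw [mul_assoc]⟩
      · rw [← hfb]
        refine ⟨(e * f) * z, ?_⟩
        rw [← mul_assoc, lunipotent_key hS he hf]
  refine ⟨?_, main⟩
  intro a b
  obtain ⟨u, hu⟩ := hS.1 a
  obtain ⟨v, hv⟩ := hS.1 b
  have heu : (a * u) * (a * u) = a * u := by
    rw [← mul_assoc, hu]
  have hfv : (b * v) * (b * v) = b * v := by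
    rw [← mul_assoc, hv]
  have hea : rightIdeal (a * u) = rightIdeal a := by
    ext y
    constructor
    · rintro ⟨s, rfl⟩
      exact ⟨u * s, by rw [mul_assoc]⟩
    · rintro ⟨s, rfl⟩
      exact ⟨a * s, by rw [mul_assoc, ← mul_assoc, ← mul_assoc, hu]⟩
  have hfb : rightIdeal (b * v) = rightIdeal b := by
    ext y
    constructor
    · rintro ⟨s, rfl⟩
      exact ⟨v * s, by rw [mul_assoc]⟩
    · rintro ⟨s, rfl⟩
      exact ⟨b * s, by rw [mul_assoc, ← mul_assoc, ← mul_assoc, hv]⟩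
  exact ⟨(a * u) * (b * v), main a b (a * u) (b * v) heu hfv hea hfb⟩
end
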